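/- There exists a unique power series exp(x) = x + e_1 x^q + e_2 x^{q^2} + ... with coefficients e_i in k(t) (constant coefficient of x equal to 1, and only terms of degree q^i appearing) satisfying the functional equation exp(t·x) = t·exp(x) + (exp x)^q as formal power series. -/

import Mathlib

open PowerSeries

section
variable {R : Type*} [CommRing R] (p : ℕ) [hp : Fact p.Prime] [CharP R p]

lemma my_coeff_pow_char (f : PowerSeries R) (n : ℕ) :
    PowerSeries.coeff n (f ^ p) =
      if p ∣ n then (PowerSeries.coeff (n / p) f) ^ p else 0 := by
  set T := f.trunc (n + 1) with hT
  have h1 : PowerSeries.coeff n (f ^ p) = PowerSeries.coeff n ((T : PowerSeries R) ^ p) := by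
    obtain ⟨c, hc⟩ := sub_dvd_pow_sub_pow (T : PowerSeries R) f p
    have hz : ∀ i ≤ n, PowerSeries.coeff i ((T : PowerSeries R) - f) = 0 := by
      intro i hi
      rw [map_sub, Polynomial.coeff_coe, hT, PowerSeries.coeff_trunc,
        if_pos (Nat.lt_succ_of_le hi), sub_self]
    have h0 : PowerSeries.coeff n ((T : PowerSeries R) ^ p - f ^ p) = 0 := by
      rw [hc, PowerSeries.coeff_mul]
      refine Finset.sum_eq_zero fun x hx => ?_
      rw [hz x.1 (by
        have := Finset.HasAntidiagonal.mem_antidiagonal.mp hx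
        omega), zero_mul]
    rw [map_sub, sub_eq_zero] at h0
    exact h0.symm
  rw [h1, ← Polynomial.coe_pow, ← Polynomial.map_frobenius_expand p T, Polynomial.coeff_coe,
    Polynomial.coeff_map, Polynomial.coeff_expand hp.out.pos]
  by_cases hd : p ∣ n
  · rw [if_pos hd, if_pos hd]
    rw [hT, PowerSeries.coeff_trunc, if_pos (Nat.lt_succ_of_le (Nat.div_le_self n p))]
    rfl
  · rw [if_neg hd, if_neg hd, map_zero]

lemma my_coeff_pow_char_pow (f : PowerSeries R) (m n : ℕ) :
    PowerSeries.coeff n (f ^ p ^ m) =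
      if p ^ m ∣ n then (PowerSeries.coeff (n / p ^ m) f) ^ p ^ m else 0 := by
  induction m generalizing n with
  | zero => simp
  | succ m ih =>
    rw [pow_succ, pow_mul, my_coeff_pow_char p (f ^ p ^ m) n]
    by_cases hd : p ∣ n
    · rw [if_pos hd, ih (n / p)]
      obtain ⟨c, rfl⟩ := hd
      have hp0 : p ≠ 0 := hp.out.ne_zero
      rw [Nat.mul_div_cancel_left c (Nat.pos_of_ne_zero hp0)]
      have hiff : p ^ m * p ∣ p * c ↔ p ^ m ∣ c := by
        rw [mul_comm (p ^ m) p]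
        exact mul_dvd_mul_iff_left (by exact_mod_cast hp0)
      by_cases hc : p ^ m ∣ c
      · rw [if_pos hc, if_pos (hiff.mpr hc), ← pow_mul]
        congr 2
        rw [mul_comm (p ^ m) p, Nat.mul_div_mul_left _ _ (Nat.pos_of_ne_zero hp0)]
      · rw [if_neg hc, if_neg (fun h => hc (hiff.mp h)), zero_pow hp0]
    · rw [if_neg hd, if_neg (fun h => hd ((dvd_mul_left p (p ^ m)).trans h))]

end


/-- There exists a unique power series
`exp(x) = x + e₁ x^q + e₂ x^{q²} + ⋯` with coefficients in `F = k(t)`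
(coefficient of `x` equal to `1`, and only terms of degree `q^i` appearing)
satisfying `exp(t·x) = t·exp(x) + (exp x)^q` as formal power series. -/
theorem carlitz_exponential_exists_unique
    (k : Type*) [Field k] [Fintype k] (q : ℕ) (hq : q = Fintype.card k) :
    ∃! f : PowerSeries (RatFunc k),
      (PowerSeries.coeff 1 f = 1) ∧
      (∀ n : ℕ, (∀ i : ℕ, n ≠ q ^ i) → PowerSeries.coeff n f = 0) ∧
      PowerSeries.rescale (RatFunc.X : RatFunc k) f = (RatFunc.X : RatFunc k) • f + f ^ q := by
  classical
  have hq2 : 1 < q := hq ▸ Fintype.one_lt_card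
  set p := ringChar k with hpdef
  haveI : CharP k p := ringChar.charP k
  haveI hpf : Fact p.Prime := ⟨CharP.char_is_prime k p⟩
  obtain ⟨m, -, hqm⟩ := FiniteField.card k p
  rw [← hq] at hqm
  haveI : CharP (RatFunc k) p :=
    charP_of_injective_algebraMap (algebraMap k (RatFunc k)).injective p
  haveI : CharP (PowerSeries (RatFunc k)) p :=
    charP_of_injective_ringHom (PowerSeries.C_injective) p
  have hX : ∀ n : ℕ, 2 ≤ n → (RatFunc.X : RatFunc k) ^ n - RatFunc.X ≠ 0 := by
    intro n hn h
    rw [sub_eq_zero] at h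
    have hinj := IsFractionRing.injective (Polynomial k) (RatFunc k)
    rw [← RatFunc.algebraMap_X, ← map_pow] at h
    have h2 := congrArg Polynomial.natDegree (hinj h)
    rw [Polynomial.natDegree_X_pow, Polynomial.natDegree_X] at h2
    omega
  have hXq : ∀ i : ℕ, (RatFunc.X : RatFunc k) ^ q ^ (i + 1) - RatFunc.X ≠ 0 := by
    intro i
    refine hX _ ?_
    calc 2 ≤ q := hq2
    _ = q ^ 1 := (pow_one q).symm
    _ ≤ q ^ (i + 1) := Nat.pow_le_pow_right (by omega) (by omega)
  let e : ℕ → RatFunc k := fun i =>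
    Nat.rec 1 (fun i ei => ei ^ q / (RatFunc.X ^ q ^ (i + 1) - RatFunc.X)) i
  have he0 : e 0 = 1 := rfl
  have he : ∀ i, e (i + 1) * (RatFunc.X ^ q ^ (i + 1) - RatFunc.X) = e i ^ q := by
    intro i
    exact div_mul_cancel₀ _ (hXq i)
  let f : PowerSeries (RatFunc k) := PowerSeries.mk fun n =>
    if ∃ i : ℕ, n = q ^ i then e (Nat.log q n) else 0
  have hfc : ∀ i, PowerSeries.coeff (q ^ i) f = e i := by
    intro i
    rw [PowerSeries.coeff_mk, if_pos ⟨i, rfl⟩, Nat.log_pow hq2]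
  have hfc1 : PowerSeries.coeff 1 f = 1 := by
    have := hfc 0
    rwa [pow_zero, he0] at this
  have hf0 : ∀ n, (∀ i : ℕ, n ≠ q ^ i) → PowerSeries.coeff n f = 0 := by
    intro n hn
    rw [PowerSeries.coeff_mk, if_neg]
    rintro ⟨i, rfl⟩
    exact hn i rfl
  have hcoeffq : ∀ (g : PowerSeries (RatFunc k)) (n : ℕ),
      PowerSeries.coeff n (g ^ q) =
      if q ∣ n then PowerSeries.coeff (n / q) g ^ q else 0 := by
    intro g n
    rw [hqm]
    exact my_coeff_pow_char_pow p g (m : ℕ) n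
  have hndvd1 : ¬ q ∣ 1 := fun h => absurd (Nat.le_of_dvd one_pos h) (by omega)
  have hdivq : ∀ i : ℕ, q ^ (i + 1) / q = q ^ i := by
    intro i
    rw [pow_succ, Nat.mul_div_cancel _ (by omega : 0 < q)]
  have heq : PowerSeries.rescale (RatFunc.X : RatFunc k) f
      = (RatFunc.X : RatFunc k) • f + f ^ q := by
    ext n
    rw [PowerSeries.coeff_rescale, map_add, hcoeffq, PowerSeries.coeff_smul, smul_eq_mul]
    by_cases hn : ∃ i : ℕ, n = q ^ i
    · obtain ⟨i, rfl⟩ := hn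
      cases i with
      | zero =>
        rw [pow_zero, hfc1, if_neg hndvd1, pow_one, add_zero]
      | succ i =>
        rw [if_pos (dvd_pow_self q (Nat.succ_ne_zero i)), hdivq, hfc, hfc i]
        linear_combination he i
    · push_neg at hn
      rw [hf0 n hn, mul_zero, mul_zero, zero_add]
      by_cases hd : q ∣ n
      · rw [if_pos hd, hf0 (n / q), zero_pow (by omega : q ≠ 0)]
        intro j hj
        exact hn (j + 1) (by rw [← Nat.div_mul_cancel hd, hj, pow_succ])
      · rw [if_neg hd]
  refine ⟨f, ⟨hfc1, hf0, heq⟩, ?_⟩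
  rintro g ⟨hg1, hg0, hgeq⟩
  have hdall : ∀ n : ℕ, PowerSeries.coeff n (g - f) = 0 := by
    intro n
    induction n using Nat.strong_induction_on with
    | _ n ih =>
    by_cases hn : ∃ i : ℕ, n = q ^ i
    · obtain ⟨i, rfl⟩ := hn
      cases i with
      | zero => rw [pow_zero, map_sub, hg1, hfc1, sub_self]
      | succ i =>
        have hsub : PowerSeries.rescale (RatFunc.X : RatFunc k) (g - f)
            = (RatFunc.X : RatFunc k) • (g - f) + (g - f) ^ q := by
          rw [map_sub, hgeq, heq, hqm, sub_pow_char_pow, smul_sub]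
          abel
        have hc := congrArg (PowerSeries.coeff (q ^ (i + 1))) hsub
        rw [PowerSeries.coeff_rescale, map_add, hcoeffq, PowerSeries.coeff_smul,
          smul_eq_mul, if_pos (dvd_pow_self q (Nat.succ_ne_zero i)), hdivq,
          ih _ (Nat.pow_lt_pow_right hq2 (lt_add_one i)),
          zero_pow (by omega : q ≠ 0), add_zero] at hc
        have hz : ((RatFunc.X : RatFunc k) ^ q ^ (i + 1) - RatFunc.X)
            * PowerSeries.coeff (q ^ (i + 1)) (g - f) = 0 := by
          linear_combination hc
        rcases mul_eq_zero.mp hz with h | h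
        · exact absurd h (hXq i)
        · exact h
    · push_neg at hn
      rw [map_sub, hg0 n hn, hf0 n hn, sub_self]
  ext n
  have := hdall n
  rw [map_sub, sub_eq_zero] at this
  exact this
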